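/- If G is an abelian group whose power graph has finite independence number, then either G is finite or G is isomorphic to C_{p^∞} × H for some prime p, where H is a finite group with p not dividing |H|. -/

import Mathlib

/-- The power graph of a group: distinct `x, y` are adjacent iff one is a power of the other. -/
def powerGraph (G : Type*) [Group G] : SimpleGraph G where
  Adj x y := x ≠ y ∧ ∃ n : ℕ, y = x ^ n ∨ x = y ^ n
  symm := by constructor; rintro x y ⟨h, n, hn⟩; exact ⟨h.symm, n, hn.symm⟩
  loopless := by constructor; rintro x ⟨h, _⟩; exact h rfl

/-- A set of vertices is independent if no two of its elements are adjacent. -/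
def IsIndepSet {V : Type*} (G' : SimpleGraph V) (s : Set V) : Prop :=
  s.Pairwise fun x y => ¬ G'.Adj x y

/-- The Prüfer `p`-group: the `p`-primary component of `ℚ/ℤ`. -/
def pruferGroup (p : ℕ) : AddSubgroup (ℚ ⧸ AddSubgroup.zmultiples (1 : ℚ)) where
  carrier := {x | ∃ n : ℕ, p ^ n • x = 0}
  zero_mem' := ⟨0, smul_zero _⟩
  add_mem' := by
    rintro a b ⟨m, hm⟩ ⟨n, hn⟩
    refine ⟨m + n, ?_⟩
    have ha : p ^ (m + n) • a = 0 := by rw [pow_add, mul_comm, mul_smul, hm, smul_zero]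
    have hb : p ^ (m + n) • b = 0 := by rw [pow_add, mul_smul, hn, smul_zero]
    rw [smul_add, ha, hb, add_zero]
  neg_mem' := by
    rintro a ⟨m, hm⟩
    exact ⟨m, by rw [smul_neg, hm, neg_zero]⟩

section Part1
variable {G : Type*} [CommGroup G] {N : ℕ}

lemma exists_indep_finset (S : Set G) (hS : S.Infinite)
    (hfin : ∀ g ∈ S, {h | h ∈ S ∧ (powerGraph G).Adj g h}.Finite) (k : ℕ) :
    ∃ s : Finset G, ↑s ⊆ S ∧ s.card = k ∧ IsIndepSet (powerGraph G) ↑s := by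
  classical
  induction k with
  | zero => exact ⟨∅, by simp, by simp, by simp [IsIndepSet]⟩
  | succ k ih =>
    obtain ⟨s, hsS, hcard, hind⟩ := ih
    have hforb : ((s : Set G) ∪ ⋃ g ∈ (s : Set G), {h | h ∈ S ∧ (powerGraph G).Adj g h}).Finite :=
      s.finite_toSet.union (Set.Finite.biUnion s.finite_toSet fun g hg => hfin g (hsS hg))
    obtain ⟨a, haS, hafor⟩ := (hS.diff hforb).nonempty
    have has : a ∉ s := fun hs => hafor (Set.mem_union_left _ hs)
    refine ⟨insert a s, ?_, ?_, ?_⟩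
    · rw [Finset.coe_insert]; exact Set.insert_subset haS hsS
    · rw [Finset.card_insert_of_notMem has, hcard]
    · haveI : Std.Symm (fun x y : G => ¬ (powerGraph G).Adj x y) := ⟨fun x y h ha => h ha.symm⟩
      rw [Finset.coe_insert, IsIndepSet,
        Set.pairwise_insert_of_symm]
      refine ⟨hind, fun b hb _ hadj => ?_⟩
      exact hafor (Set.mem_union_right _ (Set.mem_biUnion hb ⟨haS, hadj.symm⟩))

lemma finite_of_adj_finite (hN : ∀ s : Finset G, IsIndepSet (powerGraph G) ↑s → s.card ≤ N)
    (S : Set G) (hfin : ∀ g ∈ S, {h | h ∈ S ∧ (powerGraph G).Adj g h}.Finite) : S.Finite := by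
  by_contra hS
  obtain ⟨s, _, hcard, hind⟩ := exists_indep_finset S hS hfin (N + 1)
  have := hN s hind; omega

lemma powers_finite {g : G} (hg : 0 < orderOf g) : {h : G | ∃ n : ℕ, h = g ^ n}.Finite := by
  refine Set.Finite.subset ((Set.finite_Iio (orderOf g)).image (g ^ ·)) ?_
  rintro h ⟨n, rfl⟩
  exact ⟨n % orderOf g, Nat.mod_lt _ hg, pow_mod_orderOf g n⟩

lemma adj_orderOf_dvd {g h : G} (hadj : (powerGraph G).Adj g h) :
    orderOf h ∣ orderOf g ∨ orderOf g ∣ orderOf h := by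
  obtain ⟨-, n, rfl | rfl⟩ := hadj
  · exact Or.inl (orderOf_pow_dvd n)
  · exact Or.inr (orderOf_pow_dvd n)

lemma mem_powers_of_adj_same_order {g h : G} (hd : 0 < orderOf g)
    (hgh : orderOf g = orderOf h) (hadj : (powerGraph G).Adj g h) : ∃ n : ℕ, h = g ^ n := by
  obtain ⟨hne, n, rfl | hg⟩ := hadj
  · exact ⟨n, rfl⟩
  by_cases hn : n = 0
  · subst hn
    rw [pow_zero] at hg
    refine ⟨0, ?_⟩
    rw [pow_zero]
    have : orderOf h = 1 := by rw [← hgh, hg, orderOf_one]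
    exact orderOf_eq_one_iff.mp this
  · set d := orderOf g with hdf
    have hhn : orderOf (h ^ n) = orderOf h / (orderOf h).gcd n := orderOf_pow' h hn
    rw [← hg, ← hgh] at hhn
    have hgcd : d.gcd n = 1 := by
      have hdvd : d.gcd n ∣ d := Nat.gcd_dvd_left _ _
      rcases (Nat.div_eq_self.mp hhn.symm) with h0 | h1
      · omega
      · exact h1
    have hcop : n.Coprime d := Nat.coprime_comm.mp hgcd
    have htot : n ^ d.totient ≡ 1 [MOD d] := Nat.ModEq.pow_totient hcop
    have htpos : 0 < d.totient := Nat.totient_pos.mpr hd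
    have horder : orderOf h = d := hgh.symm
    refine ⟨n ^ (d.totient - 1), ?_⟩
    have h1 : g ^ (n ^ (d.totient - 1)) = h ^ (n ^ d.totient) := by
      rw [hg, ← pow_mul]
      congr 1
      rw [← pow_succ']
      congr 1
      omega
    rw [h1, ← pow_mod_orderOf, horder]
    have hmod : n ^ d.totient % d = 1 % d := htot
    rw [hmod]
    rcases Nat.lt_or_ge 1 d with hd1 | hd1
    · rw [Nat.mod_eq_of_lt hd1, pow_one]
    · have hd1' : d = 1 := by omega
      have hh1 : h = 1 := orderOf_eq_one_iff.mp (horder.trans hd1')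
      simp [hh1]

lemma layer_finite (hN : ∀ s : Finset G, IsIndepSet (powerGraph G) ↑s → s.card ≤ N)
    {d : ℕ} (hd : 0 < d) : {g : G | orderOf g = d}.Finite := by
  refine finite_of_adj_finite hN _ ?_
  intro g hg
  have hg' : orderOf g = d := hg
  refine Set.Finite.subset (powers_finite (g := g) (hg'.symm ▸ hd)) ?_
  rintro h ⟨hh, hadj⟩
  exact mem_powers_of_adj_same_order (hg'.symm ▸ hd) (hg'.trans (Set.mem_setOf_eq ▸ hh).symm) hadj

lemma torsion_of_bound (hN : ∀ s : Finset G, IsIndepSet (powerGraph G) ↑s → s.card ≤ N)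
    (g : G) : IsOfFinOrder g := by
  by_contra hg
  have hinj : Function.Injective (fun n : ℕ => g ^ n) :=
    injective_pow_iff_not_isOfFinOrder.mpr hg
  set S : Set G := (fun q => g ^ q) '' {q | q.Prime} with hSdef
  have hSinf : S.Infinite := Set.Infinite.image (Set.injOn_of_injective hinj)
    Nat.infinite_setOf_prime
  have key : ∀ q q' : ℕ, q.Prime → q'.Prime → ∀ n : ℕ, g ^ q' = (g ^ q) ^ n → q = q' := by
    intro q q' hq hq' n he
    rw [← pow_mul] at he
    have heq := hinj he.symm
    have hqd : q ∣ q' := ⟨n, heq.symm⟩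
    exact (Nat.prime_dvd_prime_iff_eq hq hq').mp hqd
  have hfin : S.Finite := by
    refine finite_of_adj_finite hN S fun a ha => ?_
    have hempty : {h | h ∈ S ∧ (powerGraph G).Adj a h} = ∅ := by
      ext b
      simp only [Set.mem_setOf_eq, Set.mem_empty_iff_false, iff_false]
      rintro ⟨hb, hadj⟩
      obtain ⟨q, hq, rfl⟩ := ha
      obtain ⟨q', hq', rfl⟩ := hb
      obtain ⟨hne, n, he | he⟩ := hadj
      · exact hne (by rw [key q q' hq hq' n he])
      · exact hne (by rw [key q' q hq' hq n he])
    rw [hempty]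
    exact Set.finite_empty
  exact hSinf hfin

end Part1

section Part2
variable {G : Type*} [CommGroup G] {N : ℕ}

lemma primes_realized_finite (hN : ∀ s : Finset G, IsIndepSet (powerGraph G) ↑s → s.card ≤ N) :
    {q : ℕ | q.Prime ∧ ∃ g : G, orderOf g = q}.Finite := by
  set S : Set G := {g : G | (orderOf g).Prime} with hSdef
  have hSfin : S.Finite := by
    refine finite_of_adj_finite hN S fun g hg => ?_
    have hg' : (orderOf g).Prime := hg
    refine Set.Finite.subset (layer_finite hN hg'.pos) ?_
    rintro h ⟨hh, hadj⟩
    have hh' : (orderOf h).Prime := hh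
    rcases adj_orderOf_dvd hadj with hd | hd
    · exact (Nat.prime_dvd_prime_iff_eq hh' hg').mp hd
    · exact ((Nat.prime_dvd_prime_iff_eq hg' hh').mp hd).symm
  refine Set.Finite.subset (hSfin.image orderOf) ?_
  rintro q ⟨hq, g, hg⟩
  refine ⟨g, ?_, hg⟩
  show (orderOf g).Prime
  rw [hg]; exact hq

lemma exists_pow_orderOf_eq {g : G} (hg : 0 < orderOf g) {m : ℕ} (hm : m ∣ orderOf g) :
    ∃ t : ℕ, orderOf (g ^ t) = m := by
  refine ⟨orderOf g / m, ?_⟩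
  have hm0 : m ≠ 0 := by rintro rfl; rw [zero_dvd_iff] at hm; omega
  have hdiv : orderOf g / m ≠ 0 := by
    have := Nat.le_of_dvd hg hm
    have : 0 < orderOf g / m := Nat.div_pos this (by omega)
    omega
  have hddvd : orderOf g / m ∣ orderOf g := by
    obtain ⟨c, hc⟩ := hm
    exact ⟨m, by rw [hc, Nat.mul_div_cancel_left c (by omega), mul_comm]⟩
  rw [orderOf_pow_of_dvd hdiv hddvd, Nat.div_div_self hm (by omega)]

lemma subgroup_order_layers (K : Subgroup G) {g : G} (hg : g ∈ K) (hor : 0 < orderOf g)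
    {m : ℕ} (hm : m ∣ orderOf g) : ∃ h : G, h ∈ K ∧ orderOf h = m := by
  obtain ⟨t, ht⟩ := exists_pow_orderOf_eq hor hm
  exact ⟨g ^ t, K.pow_mem hg t, ht⟩

lemma subgroup_unbounded_order (hN : ∀ s : Finset G, IsIndepSet (powerGraph G) ↑s → s.card ≤ N)
    (K : Subgroup G) (hK : (K : Set G).Infinite) (B : ℕ) :
    ∃ g : G, g ∈ K ∧ B < orderOf g := by
  by_contra hb
  push_neg at hb
  have hsub : (K : Set G) ⊆ ⋃ d ∈ Finset.Icc 1 B, {g : G | orderOf g = d} := by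
    intro g hg
    have h1 : 0 < orderOf g := (torsion_of_bound hN g).orderOf_pos
    have h2 : orderOf g ≤ B := hb g hg
    refine Set.mem_biUnion ?_ rfl
    exact Finset.mem_Icc.mpr ⟨by omega, by omega⟩
  refine hK (Set.Finite.subset ?_ hsub)
  refine Set.Finite.biUnion (Finset.finite_toSet _) fun d hd => ?_
  simp only [Finset.mem_coe, Finset.mem_Icc] at hd
  exact layer_finite hN (by omega)

lemma exists_prime_unbounded (hN : ∀ s : Finset G, IsIndepSet (powerGraph G) ↑s → s.card ≤ N)
    (K : Subgroup G) (hK : (K : Set G).Infinite) :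
    ∃ p : ℕ, p.Prime ∧ ∀ n : ℕ, ∃ g : G, g ∈ K ∧ orderOf g = p ^ n := by
  classical
  by_contra hcon
  push_neg at hcon
  -- for each prime q there is a bound b q with no element of K of order q ^ (b q)
  have hbound : ∀ q : ℕ, q.Prime → ∃ b : ℕ, ∀ g : G, g ∈ K → ¬ q ^ b ∣ orderOf g := by
    intro q hq
    obtain ⟨n, hn⟩ := hcon q hq
    refine ⟨n, fun g hg hdvd => ?_⟩
    have hor : 0 < orderOf g := (torsion_of_bound hN g).orderOf_pos
    obtain ⟨h, hhK, hh⟩ := subgroup_order_layers K hg hor hdvd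
    exact hn h hhK hh
  set Pf : Finset ℕ := (primes_realized_finite hN (G := G)).toFinset with hPf
  choose b hb using hbound
  -- a uniform bound on all orders of elements of K
  set B : ℕ := Pf.sup (fun q => if hq : q.Prime then b q hq else 0) with hB
  set M : ℕ := Pf.sup id + 2 with hM
  set X : ℕ := M ^ B with hX
  obtain ⟨g, hgK, hgord⟩ := subgroup_unbounded_order hN K hK (X ^ Pf.card)
  set n := orderOf g with hn
  have hn0 : n ≠ 0 := by
    have : 0 < orderOf g := (torsion_of_bound hN g).orderOf_pos
    omega
  -- every prime in the factorization of n is in Pf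
  have hsupp : n.factorization.support ⊆ Pf := by
    intro q hq
    have hqp : q.Prime := Nat.prime_of_mem_primeFactors (by rwa [Nat.support_factorization] at hq)
    have hqd : q ∣ n := Nat.dvd_of_mem_primeFactors (by rwa [Nat.support_factorization] at hq)
    have hor : 0 < orderOf g := by omega
    obtain ⟨h, hhK, hh⟩ := subgroup_order_layers K hgK hor (hn ▸ hqd)
    rw [hPf, Set.Finite.mem_toFinset]
    exact ⟨hqp, h, hh⟩
  -- some prime power factor exceeds X
  have hexists : ∃ q ∈ n.factorization.support, X < q ^ n.factorization q := by
    by_contra hall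
    push_neg at hall
    have hprod : n = n.factorization.prod (fun q e => q ^ e) :=
      (Nat.factorization_prod_pow_eq_self hn0).symm
    have hle : n ≤ X ^ n.factorization.support.card := by
      conv_lhs => rw [hprod]
      exact Finset.prod_le_pow_card _ _ _ fun q hq => hall q hq
    have hcard : n.factorization.support.card ≤ Pf.card := Finset.card_le_card hsupp
    have hX1 : 1 ≤ X := Nat.one_le_pow _ _ (by omega)
    have : X ^ n.factorization.support.card ≤ X ^ Pf.card :=
      Nat.pow_le_pow_right hX1 hcard
    omega
  obtain ⟨q, hqsupp, hqX⟩ := hexists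
  have hqp : q.Prime := Nat.prime_of_mem_primeFactors (by rwa [Nat.support_factorization] at hqsupp)
  have hqPf : q ∈ Pf := hsupp hqsupp
  have hqM : q ≤ Pf.sup id := Finset.le_sup (f := id) hqPf
  -- q ^ B ≤ M ^ B = X < q ^ a, so B < a
  have hqB : q ^ B ≤ X := by
    rw [hX]
    exact Nat.pow_le_pow_left (by omega) B
  have ha : B < n.factorization q := by
    have : q ^ B < q ^ n.factorization q := lt_of_le_of_lt hqB hqX
    exact (Nat.pow_lt_pow_iff_right hqp.two_le).mp this
  have hbq : b q hqp ≤ B := by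
    rw [hB]
    have := Finset.le_sup (f := fun q => if hq : q.Prime then b q hq else 0) hqPf
    simpa [hqp] using this
  have hdvd : q ^ b q hqp ∣ n := dvd_trans (pow_dvd_pow q (by omega)) (Nat.ordProj_dvd n q)
  exact hb q hqp g hgK hdvd

end Part2

section Part3
variable {G : Type*} [CommGroup G] {N : ℕ}

open CategoryTheory in
lemma exists_chain (hN : ∀ s : Finset G, IsIndepSet (powerGraph G) ↑s → s.card ≤ N)
    {p : ℕ} (hp : p.Prime) (hall : ∀ n : ℕ, ∃ g : G, orderOf g = p ^ n) :
    ∃ x : ℕ → G, (∀ n, orderOf (x n) = p ^ n) ∧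
      ∀ n m : ℕ, n ≤ m → (x m) ^ (p ^ (m - n)) = x n := by
  have hordmap : ∀ (a b : ℕ), b ≤ a → ∀ g : G, orderOf g = p ^ a →
      orderOf (g ^ p ^ (a - b)) = p ^ b := by
    intro a b hba g hg
    have h1 : p ^ (a - b) ≠ 0 := (Nat.pow_pos hp.pos).ne'
    have h2 : p ^ (a - b) ∣ orderOf g := hg ▸ pow_dvd_pow p (Nat.sub_le a b)
    rw [orderOf_pow_of_dvd h1 h2, hg, Nat.pow_div (Nat.sub_le a b) hp.pos]
    congr 1
    omega
  let F : ℕᵒᵖ ⥤ Type _ :=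
    { obj := fun n => {g : G // orderOf g = p ^ n.unop}
      map := fun {n m} f => TypeCat.ofHom fun g =>
        ⟨g.1 ^ p ^ (n.unop - m.unop), hordmap _ _ (leOfHom f.unop) g.1 g.2⟩
      map_id := by
        intro n
        ext g
        show g.1 ^ p ^ (n.unop - n.unop) = g.1
        simp
      map_comp := by
        intro a b c f g
        ext z
        show z.1 ^ p ^ (a.unop - c.unop) = (z.1 ^ p ^ (a.unop - b.unop)) ^ p ^ (b.unop - c.unop)
        rw [← pow_mul, ← pow_add]
        congr 2
        have h1 : b.unop ≤ a.unop := leOfHom f.unop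
        have h2 : c.unop ≤ b.unop := leOfHom g.unop
        omega }
  have hfin : ∀ j : ℕᵒᵖ, Finite (F.obj j) := by
    intro j
    have : {g : G | orderOf g = p ^ j.unop}.Finite :=
      layer_finite hN (Nat.pow_pos hp.pos)
    exact this.to_subtype
  have hne : ∀ j : ℕᵒᵖ, Nonempty (F.obj j) := by
    intro j
    obtain ⟨g, hg⟩ := hall j.unop
    exact ⟨⟨g, hg⟩⟩
  obtain ⟨u, hu⟩ := nonempty_sections_of_finite_inverse_system F
  refine ⟨fun n => (u (Opposite.op n)).1, fun n => (u (Opposite.op n)).2, ?_⟩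
  intro n m hnm
  have := hu (f := (homOfLE hnm).op)
  have h2 : ((u (Opposite.op m)).1 ^ p ^ (m - n) : G) = (u (Opposite.op n)).1 :=
    congrArg Subtype.val this
  exact h2

end Part3

section Part4
variable {G : Type*} [CommGroup G] {N : ℕ}

lemma parts_eq {p q : ℕ} (hp : p.Prime) (hq : q.Prime) (hpq : p ≠ q) {u v u' v' : G}
    (hu : ∃ a, orderOf u = p ^ a) (hu' : ∃ a, orderOf u' = p ^ a)
    (hv : ∃ b, orderOf v = q ^ b) (hv' : ∃ b, orderOf v' = q ^ b)
    (h : u * v = u' * v') : u = u' ∧ v = v' := by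
  obtain ⟨a, ha⟩ := hu
  obtain ⟨a', ha'⟩ := hu'
  obtain ⟨b, hb⟩ := hv
  obtain ⟨b', hb'⟩ := hv'
  have hw2 : u⁻¹ * u' = v * v'⁻¹ := by
    rw [inv_mul_eq_iff_eq_mul, ← mul_assoc, h, mul_assoc, mul_inv_cancel, mul_one]
  have hwp : orderOf (u⁻¹ * u') ∣ p ^ (a + a') := by
    refine dvd_trans (Commute.orderOf_mul_dvd_lcm (Commute.all _ _)) ?_
    refine Nat.lcm_dvd ?_ ?_
    · rw [orderOf_inv, ha]; exact pow_dvd_pow p (by omega)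
    · rw [ha']; exact pow_dvd_pow p (by omega)
  have hwq : orderOf (u⁻¹ * u') ∣ q ^ (b + b') := by
    rw [hw2]
    refine dvd_trans (Commute.orderOf_mul_dvd_lcm (Commute.all _ _)) ?_
    refine Nat.lcm_dvd ?_ ?_
    · rw [hb]; exact pow_dvd_pow q (by omega)
    · rw [orderOf_inv, hb']; exact pow_dvd_pow q (by omega)
  have hcop : (p ^ (a + a')).Coprime (q ^ (b + b')) :=
    Nat.Coprime.pow _ _ ((Nat.coprime_primes hp hq).mpr hpq)
  have hone : orderOf (u⁻¹ * u') = 1 := by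
    have := Nat.dvd_gcd hwp hwq
    rwa [Nat.Coprime.gcd_eq_one hcop, Nat.dvd_one] at this
  have hw1 : u⁻¹ * u' = 1 := orderOf_eq_one_iff.mp hone
  have hu : u = u' := by
    have := inv_mul_eq_one.mp hw1; exact this
  refine ⟨hu, ?_⟩
  have hv1 : v * v'⁻¹ = 1 := by rw [← hw2, hw1]
  exact mul_inv_eq_one.mp hv1

lemma pow_order_dvd_prime_pow {p : ℕ} (hp : p.Prime) {g : G} {a : ℕ}
    (hg : orderOf g = p ^ a) (k : ℕ) : ∃ c, orderOf (g ^ k) = p ^ c := by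
  have := orderOf_pow_dvd (x := g) k
  rw [hg] at this
  obtain ⟨c, hc, hcc⟩ := (Nat.dvd_prime_pow hp).mp this
  exact ⟨c, hcc⟩

lemma no_two_primes (hN : ∀ s : Finset G, IsIndepSet (powerGraph G) ↑s → s.card ≤ N)
    {p q : ℕ} (hp : p.Prime) (hq : q.Prime) (hpq : p ≠ q)
    (hallp : ∀ n : ℕ, ∃ g : G, orderOf g = p ^ n)
    (hallq : ∀ n : ℕ, ∃ g : G, orderOf g = q ^ n) : False := by
  classical
  set M : ℕ := N + 1 with hM
  choose u hu using fun i : ℕ => hallp (i + 1)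
  choose v hv using fun i : ℕ => hallq (M - i)
  set z : ℕ → G := fun i => u i * v i with hz
  have hpinj : Function.Injective (p ^ · : ℕ → ℕ) := Nat.pow_right_injective hp.two_le
  have hqinj : Function.Injective (q ^ · : ℕ → ℕ) := Nat.pow_right_injective hq.two_le
  have key : ∀ i j : ℕ, i < M → j < M → ∀ k : ℕ, z j = z i ^ k → i = j := by
    intro i j hi hj k hk
    rw [hz] at hk
    simp only [mul_pow] at hk
    obtain ⟨h1, h2⟩ := parts_eq hp hq hpq ⟨j + 1, hu j⟩ (pow_order_dvd_prime_pow hp (hu i) k)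
      ⟨M - j, hv j⟩ (pow_order_dvd_prime_pow hq (hv i) k) hk
    -- orderOf u j divides p ^ (i+1), orderOf v j divides q ^ (M - i)
    have hd1 : p ^ (j + 1) ∣ p ^ (i + 1) := by
      rw [← hu j, ← hu i, h1]; exact orderOf_pow_dvd k
    have hd2 : q ^ (M - j) ∣ q ^ (M - i) := by
      rw [← hv j, ← hv i, h2]; exact orderOf_pow_dvd k
    have e1 : j + 1 ≤ i + 1 := (Nat.pow_dvd_pow_iff_le_right hp.one_lt).mp hd1
    have e2 : M - j ≤ M - i := (Nat.pow_dvd_pow_iff_le_right hq.one_lt).mp hd2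
    omega
  have hzinj : Set.InjOn z ↑(Finset.range M) := by
    intro i hi j hj hij
    simp only [Finset.coe_range, Set.mem_Iio] at hi hj
    rw [hz] at hij
    obtain ⟨h1, -⟩ := parts_eq hp hq hpq ⟨i + 1, hu i⟩ ⟨j + 1, hu j⟩
      ⟨M - i, hv i⟩ ⟨M - j, hv j⟩ hij
    have : p ^ (i + 1) = p ^ (j + 1) := by rw [← hu i, ← hu j, h1]
    have := hpinj this
    omega
  set s : Finset G := (Finset.range M).image z with hs
  have hcard : s.card = M := by
    rw [hs, Finset.card_image_of_injOn hzinj, Finset.card_range]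
  have hindep : IsIndepSet (powerGraph G) ↑s := by
    intro a ha b hb hab hadj
    rw [hs, Finset.coe_image, Finset.coe_range] at ha hb
    obtain ⟨i, hi, rfl⟩ := ha
    obtain ⟨j, hj, rfl⟩ := hb
    obtain ⟨hne, k, hk | hk⟩ := hadj
    · exact hab (by rw [key i j hi hj k hk])
    · exact hab (by rw [key j i hj hi k hk])
  have := hN s hindep
  omega

end Part4

section Part5
variable {G : Type*} [CommGroup G] {N : ℕ} {p : ℕ}

lemma zchain (hp : p.Prime) {x : ℕ → G}
    (hchain : ∀ n m : ℕ, n ≤ m → (x m) ^ (p ^ (m - n)) = x n)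
    {n m : ℕ} (hnm : n ≤ m) : (x m) ^ ((p : ℤ) ^ (m - n)) = x n := by
  have hc : ((p : ℤ) ^ (m - n)) = ((p ^ (m - n) : ℕ) : ℤ) := by push_cast; ring
  rw [hc, zpow_natCast]
  exact hchain n m hnm

lemma zkey {x : ℕ → G} (hord : ∀ n, orderOf (x n) = p ^ n) (m : ℕ) (k : ℤ) :
    (x m) ^ k = 1 ↔ (p : ℤ) ^ m ∣ k := by
  rw [← orderOf_dvd_iff_zpow_eq_one, hord]
  push_cast
  rfl

/-- The union of the chain of cyclic subgroups. -/
def chainSup (x : ℕ → G) : Subgroup G := ⨆ n, Subgroup.zpowers (x n)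

lemma mem_chainSup_iff (hp : p.Prime) {x : ℕ → G}
    (hchain : ∀ n m : ℕ, n ≤ m → (x m) ^ (p ^ (m - n)) = x n) {g : G} :
    g ∈ chainSup x ↔ ∃ (n : ℕ) (k : ℤ), (x n) ^ k = g := by
  have hmono : ∀ n m : ℕ, n ≤ m → Subgroup.zpowers (x n) ≤ Subgroup.zpowers (x m) := by
    intro n m hnm
    rw [Subgroup.zpowers_le]
    exact ⟨(p : ℤ) ^ (m - n), zchain hp hchain hnm⟩
  have hdir : Directed (· ≤ ·) (fun n => Subgroup.zpowers (x n)) := fun i j =>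
    ⟨max i j, hmono _ _ (le_max_left _ _), hmono _ _ (le_max_right _ _)⟩
  rw [chainSup, Subgroup.mem_iSup_of_directed hdir]
  simp only [Subgroup.mem_zpowers_iff]

lemma chainSup_order (hp : p.Prime) {x : ℕ → G}
    (hord : ∀ n, orderOf (x n) = p ^ n)
    (hchain : ∀ n m : ℕ, n ≤ m → (x m) ^ (p ^ (m - n)) = x n) {g : G}
    (hg : g ∈ chainSup x) : ∃ m : ℕ, orderOf g = p ^ m := by
  obtain ⟨n, k, rfl⟩ := (mem_chainSup_iff hp hchain).mp hg
  have hdvd : orderOf ((x n) ^ k) ∣ p ^ n := by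
    rw [orderOf_dvd_iff_pow_eq_one]
    have h1 : (x n) ^ (p ^ n) = 1 := by rw [← hord n]; exact pow_orderOf_eq_one _
    rw [← zpow_natCast ((x n) ^ k) (p ^ n), ← zpow_mul, mul_comm, zpow_mul, zpow_natCast, h1,
      one_zpow]
  obtain ⟨c, -, hc⟩ := (Nat.dvd_prime_pow hp).mp hdvd
  exact ⟨c, hc⟩

lemma order_p_mem (hN : ∀ s : Finset G, IsIndepSet (powerGraph G) ↑s → s.card ≤ N)
    (hp : p.Prime) {x : ℕ → G}
    (hord : ∀ n, orderOf (x n) = p ^ n)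
    (hchain : ∀ n m : ℕ, n ≤ m → (x m) ^ (p ^ (m - n)) = x n)
    {t : G} (ht : orderOf t = p) : t ∈ chainSup x := by
  classical
  by_contra htP
  have hxmem : ∀ n, x n ∈ chainSup x := fun n =>
    (mem_chainSup_iff hp hchain).mpr ⟨n, 1, zpow_one _⟩
  -- key: t * x a = (t * x b) ^ k forces a = b
  have key : ∀ a b : ℕ, ∀ k : ℕ, t * x a = (t * x b) ^ k → a = b := by
    intro a b k he
    rw [mul_pow] at he
    have hw : (t ^ k * t⁻¹) * (x b ^ k) = x a := by
      rw [mul_comm (t ^ k) t⁻¹, mul_assoc, ← he, ← mul_assoc, inv_mul_cancel, one_mul]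
    have hwP : t ^ k * t⁻¹ ∈ chainSup x := by
      have hxa : x a ∈ chainSup x := hxmem a
      have hxbk : x b ^ k ∈ chainSup x := Subgroup.pow_mem _ (hxmem b) k
      have : t ^ k * t⁻¹ = x a * (x b ^ k)⁻¹ := by
        rw [← hw, mul_assoc, mul_inv_cancel, mul_one]
      rw [this]
      exact Subgroup.mul_mem _ hxa (Subgroup.inv_mem _ hxbk)
    have hzw : t ^ ((k : ℤ) - 1) ∈ chainSup x := by
      rwa [zpow_sub, zpow_one, zpow_natCast]
    -- if p does not divide k - 1, then t ∈ chainSup x, contradiction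
    have hpdvd : (p : ℤ) ∣ (k : ℤ) - 1 := by
      by_contra hnd
      have hcop : IsCoprime ((k : ℤ) - 1) (p : ℤ) := by
        rw [Int.isCoprime_iff_gcd_eq_one]
        have hg1 : (Int.gcd ((k : ℤ) - 1) (p : ℤ) : ℤ) ∣ ((k : ℤ) - 1) := Int.gcd_dvd_left _ _
        have hg2 : Int.gcd ((k : ℤ) - 1) (p : ℤ) ∣ p := by
          have h2 := Int.gcd_dvd_right (a := (k : ℤ) - 1) (b := (p : ℤ))
          exact_mod_cast h2
        rcases (Nat.dvd_prime hp).mp hg2 with h1 | h1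
        · exact h1
        · exact absurd (by rw [← h1]; exact_mod_cast hg1) hnd
      obtain ⟨c, d, hcd⟩ := hcop
      have htp : t ^ (p : ℤ) = 1 := by
        rw [zpow_natCast, ← ht, pow_orderOf_eq_one]
      have : t = (t ^ ((k : ℤ) - 1)) ^ c * (t ^ (p : ℤ)) ^ d := by
        rw [← zpow_mul, ← zpow_mul, ← zpow_add, mul_comm ((k : ℤ) - 1) c, mul_comm (p : ℤ) d,
          hcd, zpow_one]
      rw [htp, one_zpow, mul_one] at this
      exact htP (this ▸ Subgroup.zpow_mem _ hzw c)
    have htk1 : t ^ ((k : ℤ) - 1) = 1 := by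
      rw [← orderOf_dvd_iff_zpow_eq_one, ht]
      exact hpdvd
    have hxab : x a = x b ^ k := by
      rw [← hw]
      rw [zpow_sub, zpow_one, zpow_natCast] at htk1
      rw [htk1, one_mul]
    -- p does not divide k
    have hk0 : k ≠ 0 := by
      rintro rfl
      simp only [Nat.cast_zero, zero_sub] at hpdvd
      have h2 : (p : ℤ) ∣ 1 := dvd_neg.mp hpdvd
      have h3 : p ∣ 1 := by exact_mod_cast h2
      have h4 := Nat.le_of_dvd one_pos h3
      have := hp.one_lt
      omega
    have hpk : ¬ p ∣ k := by
      intro hdk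
      have h1 : (p : ℤ) ∣ (k : ℤ) := by exact_mod_cast hdk
      have h2 : (p : ℤ) ∣ 1 := by
        have h3 := dvd_sub h1 hpdvd
        simpa using h3
      have h4 : p ∣ 1 := by exact_mod_cast h2
      have h5 := Nat.le_of_dvd one_pos h4
      have := hp.one_lt
      omega
    have hordk : orderOf (x b ^ k) = p ^ b := by
      rw [orderOf_pow' _ hk0, hord]
      have : (p ^ b).gcd k = 1 :=
        Nat.Coprime.pow_left b (hp.coprime_iff_not_dvd.mpr hpk)
      rw [this, Nat.div_one]
    have : p ^ a = p ^ b := by rw [← hord a, hxab, hordk]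
    exact Nat.pow_right_injective hp.two_le this
  -- build a large independent set
  set f : ℕ → G := fun i => t * x (i + 1) with hf
  have hfinj : Set.InjOn f ↑(Finset.range (N + 1)) := by
    intro i _ j _ hij
    rw [hf] at hij
    have : x (i + 1) = x (j + 1) := mul_left_cancel hij
    have h2 : p ^ (i + 1) = p ^ (j + 1) := by rw [← hord, this, hord]
    have := Nat.pow_right_injective hp.two_le h2
    omega
  set s : Finset G := (Finset.range (N + 1)).image f with hs
  have hcard : s.card = N + 1 := by
    rw [hs, Finset.card_image_of_injOn hfinj, Finset.card_range]
  have hindep : IsIndepSet (powerGraph G) ↑s := by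
    intro A hA B hB hAB hadj
    rw [hs, Finset.coe_image, Finset.coe_range] at hA hB
    obtain ⟨i, hi, rfl⟩ := hA
    obtain ⟨j, hj, rfl⟩ := hB
    obtain ⟨hne, k, hk | hk⟩ := hadj
    · have h1 : j + 1 = i + 1 := key (j + 1) (i + 1) k hk
      have h2 : i = j := by omega
      exact hAB (by rw [h2])
    · have h1 : i + 1 = j + 1 := key (i + 1) (j + 1) k hk
      have h2 : i = j := by omega
      exact hAB (by rw [h2])
  have := hN s hindep
  omega

lemma ppow_mem (hN : ∀ s : Finset G, IsIndepSet (powerGraph G) ↑s → s.card ≤ N)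
    (hp : p.Prime) {x : ℕ → G}
    (hord : ∀ n, orderOf (x n) = p ^ n)
    (hchain : ∀ n m : ℕ, n ≤ m → (x m) ^ (p ^ (m - n)) = x n)
    {g : G} {n : ℕ} (hg : orderOf g = p ^ n) : g ∈ chainSup x := by
  induction n generalizing g with
  | zero =>
    rw [pow_zero, orderOf_eq_one_iff] at hg
    rw [hg]
    exact Subgroup.one_mem _
  | succ n ih =>
    have hgp : orderOf (g ^ p) = p ^ n := by
      have h1 : p ≠ 0 := hp.pos.ne'
      have h2 : p ∣ orderOf g := hg ▸ dvd_pow_self p (Nat.succ_ne_zero n)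
      rw [orderOf_pow_of_dvd h1 h2, hg, pow_succ, Nat.mul_div_cancel _ hp.pos]
    obtain ⟨m, k, hmk⟩ := (mem_chainSup_iff hp hchain).mp (ih hgp)
    set y : G := (x (m + 1)) ^ k with hy
    have hyp : y ^ (p : ℤ) = g ^ (p : ℤ) := by
      have hxm : (x (m + 1)) ^ (p : ℤ) = x m := by
        have := zchain hp hchain (n := m) (m := m + 1) (by omega)
        simpa using this
      rw [hy, ← zpow_mul, mul_comm, zpow_mul, hxm, hmk, zpow_natCast]
    have hyP : y ∈ chainSup x :=
      Subgroup.zpow_mem _ ((mem_chainSup_iff hp hchain).mpr ⟨m + 1, 1, zpow_one _⟩) k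
    by_cases hgy : g * y⁻¹ = 1
    · have : g = y := by
        rw [mul_inv_eq_one] at hgy
        exact hgy
      rw [this]
      exact hyP
    · set t : G := g * y⁻¹ with htdef
      have htp : t ^ p = 1 := by
        rw [htdef, mul_pow, inv_pow, ← zpow_natCast g, ← zpow_natCast y, hyp, zpow_natCast]
        rw [mul_inv_cancel]
      have htord : orderOf t = p := by
        have hdvd : orderOf t ∣ p := orderOf_dvd_iff_pow_eq_one.mpr htp
        rcases (Nat.dvd_prime hp).mp hdvd with h1 | h1
        · exact absurd (orderOf_eq_one_iff.mp h1) hgy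
        · exact h1
      have htP : t ∈ chainSup x := order_p_mem hN hp hord hchain htord
      have : g = t * y := by rw [htdef, mul_assoc, inv_mul_cancel, mul_one]
      rw [this]
      exact Subgroup.mul_mem _ htP hyP

end Part5

section Part6
variable {G : Type*} [CommGroup G] {N : ℕ}

/-- The subgroup of elements of order coprime to `p`. -/
def primeCompl (G : Type*) [CommGroup G] (p : ℕ) (hp : p.Prime) : Subgroup G where
  carrier := {g : G | ¬ p ∣ orderOf g}
  one_mem' := by
    simp only [Set.mem_setOf_eq, orderOf_one, Nat.dvd_one]
    exact hp.one_lt.ne'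
  mul_mem' := by
    intro a b ha hb
    simp only [Set.mem_setOf_eq] at *
    intro hdvd
    have h1 : orderOf (a * b) ∣ (orderOf a).lcm (orderOf b) :=
      Commute.orderOf_mul_dvd_lcm (Commute.all _ _)
    have h2 : (orderOf a).lcm (orderOf b) ∣ orderOf a * orderOf b :=
      Nat.lcm_dvd (Dvd.intro _ rfl) (Dvd.intro_left _ rfl)
    have h3 : p ∣ orderOf a * orderOf b := dvd_trans hdvd (dvd_trans h1 h2)
    rcases (Nat.Prime.dvd_mul hp).mp h3 with h | h
    · exact ha h
    · exact hb h
  inv_mem' := by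
    intro a ha
    simp only [Set.mem_setOf_eq, orderOf_inv] at *
    exact ha

lemma primeCompl_finite (hN : ∀ s : Finset G, IsIndepSet (powerGraph G) ↑s → s.card ≤ N)
    {p : ℕ} (hp : p.Prime) (hallp : ∀ n : ℕ, ∃ g : G, orderOf g = p ^ n) :
    ((primeCompl G p hp : Subgroup G) : Set G).Finite := by
  by_contra hinf
  have hinf' : ((primeCompl G p hp : Subgroup G) : Set G).Infinite := hinf
  obtain ⟨q, hq, hallq⟩ := exists_prime_unbounded hN (primeCompl G p hp) hinf'
  have hqp : q ≠ p := by
    obtain ⟨g, hgK, hgord⟩ := hallq 1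
    intro hqeq
    apply hgK
    rw [hgord, pow_one, hqeq]
  exact no_two_primes hN hp hq (Ne.symm hqp) hallp fun n => (hallq n).imp fun g hg => hg.2

end Part6

section Part7

variable {p : ℕ}

/-- the class of `1 / p ^ n` in `ℚ ⧸ ℤ`. -/
def aelt (p n : ℕ) : ℚ ⧸ AddSubgroup.zmultiples (1 : ℚ) :=
  QuotientAddGroup.mk (((p : ℚ) ^ n)⁻¹)

lemma zsmul_mk (k : ℤ) (r : ℚ) :
    k • (QuotientAddGroup.mk r : ℚ ⧸ AddSubgroup.zmultiples (1 : ℚ)) =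
      QuotientAddGroup.mk (k • r) :=
  ((QuotientAddGroup.mk' _).map_zsmul k r).symm

lemma nsmul_mk (k : ℕ) (r : ℚ) :
    k • (QuotientAddGroup.mk r : ℚ ⧸ AddSubgroup.zmultiples (1 : ℚ)) =
      QuotientAddGroup.mk (k • r) :=
  ((QuotientAddGroup.mk' _).map_nsmul k r).symm

lemma aelt_smul_eq_zero (hp : p.Prime) (n : ℕ) (k : ℤ) :
    k • aelt p n = 0 ↔ (p : ℤ) ^ n ∣ k := by
  have hpn : ((p : ℚ) ^ n) ≠ 0 := pow_ne_zero _ (Nat.cast_ne_zero.mpr hp.pos.ne')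
  rw [aelt, zsmul_mk, QuotientAddGroup.eq_zero_iff, AddSubgroup.mem_zmultiples_iff]
  constructor
  · rintro ⟨z, hz⟩
    rw [zsmul_eq_mul, mul_one, zsmul_eq_mul] at hz
    refine ⟨z, ?_⟩
    have h2 : (z : ℚ) * (p : ℚ) ^ n = (k : ℚ) := by
      field_simp at hz
      linear_combination hz
    have h3 : ((p ^ n * z : ℤ) : ℚ) = ((k : ℤ) : ℚ) := by push_cast; linear_combination h2
    exact_mod_cast h3.symm
  · rintro ⟨z, rfl⟩
    refine ⟨z, ?_⟩
    rw [zsmul_eq_mul, mul_one, zsmul_eq_mul]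
    push_cast
    field_simp

lemma aelt_mem_prufer (hp : p.Prime) (n : ℕ) (k : ℤ) : k • aelt p n ∈ pruferGroup p := by
  refine ⟨n, ?_⟩
  have h1 : (p ^ n : ℕ) • (k • aelt p n) = ((p : ℤ) ^ n * k) • aelt p n := by
    rw [← natCast_zsmul, smul_smul]
    congr 1
  rw [h1, (aelt_smul_eq_zero hp n _)]
  exact Dvd.intro k rfl

lemma mem_prufer_rep (hp : p.Prime) {X : ℚ ⧸ AddSubgroup.zmultiples (1 : ℚ)}
    (hX : X ∈ pruferGroup p) : ∃ (n : ℕ) (k : ℤ), X = k • aelt p n := by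
  obtain ⟨n, hn⟩ := hX
  induction X using QuotientAddGroup.induction_on with
  | H r =>
    rw [nsmul_mk, QuotientAddGroup.eq_zero_iff, AddSubgroup.mem_zmultiples_iff] at hn
    obtain ⟨z, hz⟩ := hn
    rw [zsmul_eq_mul, mul_one, nsmul_eq_mul] at hz
    have hpn : ((p : ℚ) ^ n) ≠ 0 := pow_ne_zero _ (Nat.cast_ne_zero.mpr hp.pos.ne')
    refine ⟨n, z, ?_⟩
    rw [aelt, zsmul_mk]
    congr 1
    rw [zsmul_eq_mul]
    have hzr : (z : ℚ) = (p : ℚ) ^ n * r := by push_cast at hz ⊢; linear_combination hz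
    rw [hzr]
    field_simp

lemma aelt_shift (hp : p.Prime) (d n : ℕ) : ((p : ℤ) ^ d) • aelt p (d + n) = aelt p n := by
  rw [aelt, aelt, zsmul_mk]
  congr 1
  rw [zsmul_eq_mul]
  have hpn : ((p : ℚ)) ≠ 0 := Nat.cast_ne_zero.mpr hp.pos.ne'
  push_cast
  rw [pow_add]
  field_simp

lemma aelt_shift' (hp : p.Prime) {n m : ℕ} (h : n ≤ m) :
    ((p : ℤ) ^ (m - n)) • aelt p m = aelt p n := by
  have h2 : m = (m - n) + n := by omega
  rw [h2, ← aelt_shift hp (m - n) n]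
  congr 2
  omega

end Part7

section Part8
variable {G : Type*} [CommGroup G] {p : ℕ}

lemma rep_welldef_le (hp : p.Prime) {x : ℕ → G}
    (hord : ∀ n, orderOf (x n) = p ^ n)
    (hchain : ∀ n m : ℕ, n ≤ m → (x m) ^ (p ^ (m - n)) = x n)
    {n m : ℕ} (hnm : n ≤ m) (k l : ℤ) (h : k • aelt p n = l • aelt p m) :
    x n ^ k = x m ^ l := by
  have h1 : k • aelt p n = (k * (p : ℤ) ^ (m - n)) • aelt p m := by
    rw [← aelt_shift' hp hnm, smul_smul]
  rw [h1] at h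
  have h2 : (k * (p : ℤ) ^ (m - n) - l) • aelt p m = 0 := by
    rw [sub_smul, h, sub_self]
  have h3 : (p : ℤ) ^ m ∣ k * (p : ℤ) ^ (m - n) - l := (aelt_smul_eq_zero hp m _).mp h2
  have h4 : (x m) ^ (k * (p : ℤ) ^ (m - n) - l) = 1 := (zkey hord m _).mpr h3
  have h5 : (x m) ^ (k * (p : ℤ) ^ (m - n)) = (x m) ^ l := by
    rw [zpow_sub, ← div_eq_mul_inv] at h4
    exact div_eq_one.mp h4
  rw [← h5, mul_comm, zpow_mul, zchain hp hchain hnm]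

lemma rep_welldef (hp : p.Prime) {x : ℕ → G}
    (hord : ∀ n, orderOf (x n) = p ^ n)
    (hchain : ∀ n m : ℕ, n ≤ m → (x m) ^ (p ^ (m - n)) = x n)
    (n m : ℕ) (k l : ℤ) (h : k • aelt p n = l • aelt p m) :
    x n ^ k = x m ^ l := by
  rcases le_total n m with hnm | hmn
  · exact rep_welldef_le hp hord hchain hnm k l h
  · exact (rep_welldef_le hp hord hchain hmn l k h.symm).symm

variable (hp : p.Prime)

/-- The underlying function of the isomorphism from the Prüfer group to the chain union. -/
noncomputable def pruferFun (hp : p.Prime) (x : ℕ → G) (X : pruferGroup p) : G :=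
  x (mem_prufer_rep hp X.2).choose ^ (mem_prufer_rep hp X.2).choose_spec.choose

lemma pruferFun_eq (hp : p.Prime) {x : ℕ → G}
    (hord : ∀ n, orderOf (x n) = p ^ n)
    (hchain : ∀ n m : ℕ, n ≤ m → (x m) ^ (p ^ (m - n)) = x n)
    (X : pruferGroup p) {n : ℕ} {k : ℤ} (h : (X : ℚ ⧸ AddSubgroup.zmultiples (1 : ℚ)) = k • aelt p n) :
    pruferFun hp x X = x n ^ k := by
  have h0 := (mem_prufer_rep hp X.2).choose_spec.choose_spec
  exact rep_welldef hp hord hchain _ n _ k (h0.symm.trans h)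

lemma pruferFun_mul (hp : p.Prime) {x : ℕ → G}
    (hord : ∀ n, orderOf (x n) = p ^ n)
    (hchain : ∀ n m : ℕ, n ≤ m → (x m) ^ (p ^ (m - n)) = x n)
    (X Y : pruferGroup p) :
    pruferFun hp x (X + Y) = pruferFun hp x X * pruferFun hp x Y := by
  obtain ⟨n, k, hX⟩ := mem_prufer_rep hp X.2
  obtain ⟨m, l, hY⟩ := mem_prufer_rep hp Y.2
  set s : ℕ := max n m with hs
  have hXs : (X : ℚ ⧸ AddSubgroup.zmultiples (1 : ℚ)) = (k * (p : ℤ) ^ (s - n)) • aelt p s := by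
    rw [hX, ← aelt_shift' hp (le_max_left n m), smul_smul]
  have hYs : (Y : ℚ ⧸ AddSubgroup.zmultiples (1 : ℚ)) = (l * (p : ℤ) ^ (s - m)) • aelt p s := by
    rw [hY, ← aelt_shift' hp (le_max_right n m), smul_smul]
  have hXY : ((X + Y : pruferGroup p) : ℚ ⧸ AddSubgroup.zmultiples (1 : ℚ)) =
      (k * (p : ℤ) ^ (s - n) + l * (p : ℤ) ^ (s - m)) • aelt p s := by
    rw [AddSubgroup.coe_add, hXs, hYs, add_smul]
  rw [pruferFun_eq hp hord hchain _ hXY, pruferFun_eq hp hord hchain _ hXs,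
    pruferFun_eq hp hord hchain _ hYs, zpow_add]

/-- The isomorphism between the abstract Prüfer group and the chain subgroup. -/
noncomputable def pruferHom (hp : p.Prime) {x : ℕ → G}
    (hord : ∀ n, orderOf (x n) = p ^ n)
    (hchain : ∀ n m : ℕ, n ≤ m → (x m) ^ (p ^ (m - n)) = x n) :
    Multiplicative (pruferGroup p) →* (chainSup x : Subgroup G) :=
  MonoidHom.mk' (fun X => ⟨pruferFun hp x X.toAdd, by
    obtain ⟨n, k, hX⟩ := mem_prufer_rep hp X.toAdd.2
    rw [pruferFun_eq hp hord hchain _ hX]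
    exact (mem_chainSup_iff hp hchain).mpr ⟨n, k, rfl⟩⟩)
    (fun X Y => by
      apply Subtype.ext
      exact pruferFun_mul hp hord hchain X.toAdd Y.toAdd)

lemma pruferHom_bijective (hp : p.Prime) {x : ℕ → G}
    (hord : ∀ n, orderOf (x n) = p ^ n)
    (hchain : ∀ n m : ℕ, n ≤ m → (x m) ^ (p ^ (m - n)) = x n) :
    Function.Bijective (pruferHom hp hord hchain) := by
  constructor
  · rw [injective_iff_map_eq_one]
    intro X hX
    obtain ⟨n, k, hXr⟩ := mem_prufer_rep hp X.toAdd.2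
    have h1 : pruferFun hp x X.toAdd = 1 := by
      have := congrArg Subtype.val hX
      exact this
    rw [pruferFun_eq hp hord hchain _ hXr] at h1
    have h2 : (p : ℤ) ^ n ∣ k := (zkey hord n k).mp h1
    have h3 : (X.toAdd : ℚ ⧸ AddSubgroup.zmultiples (1 : ℚ)) = 0 := by
      rw [hXr, (aelt_smul_eq_zero hp n k).mpr h2]
    have h4 : X.toAdd = 0 := Subtype.ext h3
    show X = 1
    have : X.toAdd = (1 : Multiplicative (pruferGroup p)).toAdd := h4
    exact this
  · rintro ⟨g, hg⟩
    obtain ⟨n, k, rfl⟩ := (mem_chainSup_iff hp hchain).mp hg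
    refine ⟨Multiplicative.ofAdd ⟨k • aelt p n, aelt_mem_prufer hp n k⟩, ?_⟩
    apply Subtype.ext
    show pruferFun hp x _ = x n ^ k
    exact pruferFun_eq hp hord hchain _ rfl

end Part8

def FinCarrier (n : ℕ) : Type := Fin n


theorem abelian_finite_independence_number (G : Type*) [CommGroup G]
    (h : ∃ N : ℕ, ∀ s : Finset G, IsIndepSet (powerGraph G) ↑s → s.card ≤ N) :
    Finite G ∨
      ∃ (p : ℕ) (_ : p.Prime) (H : Type) (_ : Group H) (_ : Finite H),
        ¬ p ∣ Nat.card H ∧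
          Nonempty (G ≃* Multiplicative (pruferGroup p) × H) := by
  obtain ⟨N, hN⟩ := h
  rcases finite_or_infinite G with hG | hG
  · exact Or.inl hG
  right
  have hKtop : ((⊤ : Subgroup G) : Set G).Infinite := by
    rw [Subgroup.coe_top]
    exact Set.infinite_univ
  obtain ⟨p, hp, hallp'⟩ := exists_prime_unbounded hN ⊤ hKtop
  have hallp : ∀ n, ∃ g : G, orderOf g = p ^ n := fun n => (hallp' n).imp fun g hg => hg.2
  obtain ⟨x, hord, hchain⟩ := exists_chain hN hp hallp
  set P : Subgroup G := chainSup x with hPdef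
  set K : Subgroup G := primeCompl G p hp with hKdef
  have hKfin : ((K : Subgroup G) : Set G).Finite := primeCompl_finite hN hp hallp
  haveI hKfin' : Finite K := hKfin.to_subtype
  -- the multiplication homomorphism P × K →* G
  let f0 : (P × K) →* G :=
    { toFun := fun z => (z.1 : G) * (z.2 : G)
      map_one' := by simp
      map_mul' := by
        intro z w
        push_cast
        exact mul_mul_mul_comm _ _ _ _ }
  have hf0inj : Function.Injective f0 := by
    rw [injective_iff_map_eq_one]
    rintro ⟨a, b⟩ hab
    have hab' : (a : G) * (b : G) = 1 := hab
    have h1 : (a : G) = (b : G)⁻¹ := eq_inv_of_mul_eq_one_left hab'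
    obtain ⟨m, hm⟩ := chainSup_order hp hord hchain a.2
    have h2 : ¬ p ∣ orderOf ((b : K) : G) := b.2
    have h3 : orderOf (a : G) = orderOf (b : G) := by rw [h1, orderOf_inv]
    have hm0 : m = 0 := by
      by_contra hm0
      exact h2 (by rw [← h3, hm]; exact dvd_pow_self p hm0)
    have ha1 : (a : G) = 1 := by
      rw [← orderOf_eq_one_iff, hm, hm0, pow_zero]
    have hb1 : (b : G) = 1 := by
      rw [ha1, one_mul] at hab'
      exact hab'
    have : ((a, b) : P × K) = (1, 1) := by
      rw [Prod.ext_iff]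
      exact ⟨Subtype.ext ha1, Subtype.ext hb1⟩
    exact this
  have hf0surj : Function.Surjective f0 := by
    intro g
    have hg0 : 0 < orderOf g := (torsion_of_bound hN g).orderOf_pos
    set d := orderOf g with hd
    set a := d.factorization p with ha
    set c := d / p ^ a with hc
    have hd0 : d ≠ 0 := by omega
    have hdc : p ^ a * c = d := Nat.ordProj_mul_ordCompl_eq_self d p
    have hpc : ¬ p ∣ c := Nat.not_dvd_ordCompl hp hd0
    have hcop : Nat.Coprime (p ^ a) c := Nat.Coprime.pow_left a (Nat.coprime_ordCompl hp hd0)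
    set u := Nat.gcdA (p ^ a) c with hu
    set v := Nat.gcdB (p ^ a) c with hv
    have hbez : (1 : ℤ) = ((p ^ a : ℕ) : ℤ) * u + ((c : ℕ) : ℤ) * v := by
      have h0 := Nat.gcd_eq_gcd_ab (p ^ a) c
      rw [Nat.Coprime.gcd_eq_one hcop] at h0
      exact_mod_cast h0
    have hgd : g ^ ((d : ℕ) : ℤ) = 1 := by
      rw [zpow_natCast, hd, pow_orderOf_eq_one]
    -- first component
    have hg1pow : (g ^ ((c : ℤ) * v)) ^ ((p ^ a : ℕ)) = 1 := by
      rw [← zpow_natCast (g ^ ((c : ℤ) * v)), ← zpow_mul]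
      have harith : (c : ℤ) * v * ((p ^ a : ℕ) : ℤ) = v * ((d : ℕ) : ℤ) := by
        have : ((p ^ a : ℕ) : ℤ) * (c : ℤ) = ((d : ℕ) : ℤ) := by exact_mod_cast hdc
        linear_combination v * this
      rw [harith, mul_comm, zpow_mul, hgd, one_zpow]
    have hg1P : g ^ ((c : ℤ) * v) ∈ P := by
      have hdvd : orderOf (g ^ ((c : ℤ) * v)) ∣ p ^ a :=
        orderOf_dvd_iff_pow_eq_one.mpr hg1pow
      obtain ⟨m, -, hm⟩ := (Nat.dvd_prime_pow hp).mp hdvd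
      exact ppow_mem hN hp hord hchain hm
    -- second component
    have hg2pow : (g ^ (((p ^ a : ℕ) : ℤ) * u)) ^ c = 1 := by
      rw [← zpow_natCast (g ^ (((p ^ a : ℕ) : ℤ) * u)), ← zpow_mul]
      have harith : ((p ^ a : ℕ) : ℤ) * u * (c : ℤ) = u * ((d : ℕ) : ℤ) := by
        have : ((p ^ a : ℕ) : ℤ) * (c : ℤ) = ((d : ℕ) : ℤ) := by exact_mod_cast hdc
        linear_combination u * this
      rw [harith, mul_comm, zpow_mul, hgd, one_zpow]
    have hg2K : g ^ (((p ^ a : ℕ) : ℤ) * u) ∈ K := by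
      have hdvd : orderOf (g ^ (((p ^ a : ℕ) : ℤ) * u)) ∣ c :=
        orderOf_dvd_iff_pow_eq_one.mpr hg2pow
      intro hpdvd
      exact hpc (dvd_trans hpdvd hdvd)
    refine ⟨(⟨g ^ ((c : ℤ) * v), hg1P⟩, ⟨g ^ (((p ^ a : ℕ) : ℤ) * u), hg2K⟩), ?_⟩
    show g ^ ((c : ℤ) * v) * g ^ (((p ^ a : ℕ) : ℤ) * u) = g
    rw [← zpow_add]
    have : (c : ℤ) * v + ((p ^ a : ℕ) : ℤ) * u = 1 := by linear_combination -hbez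
    rw [this, zpow_one]
  let e3 : (P × K) ≃* G := MulEquiv.ofBijective f0 ⟨hf0inj, hf0surj⟩
  let ePr : Multiplicative (pruferGroup p) ≃* P :=
    MulEquiv.ofBijective (pruferHom hp hord hchain) (pruferHom_bijective hp hord hchain)
  -- transfer K to a Type 0 group
  set n0 := Nat.card K with hn0
  let e : FinCarrier n0 ≃ K := (Finite.equivFin K).symm
  letI grpH : Group (FinCarrier n0) := Equiv.group e
  have hmul : ∀ A B : FinCarrier n0, e (A * B) = e A * e B := by
    intro A B
    have hAB : A * B = e.symm (e A * e B) := rfl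
    rw [hAB]
    exact e.apply_symm_apply _
  have hfinH : Finite (FinCarrier n0) := Finite.of_equiv K e.symm
  let eK : FinCarrier n0 ≃* K := { e with map_mul' := hmul }
  have hcardH : Nat.card (FinCarrier n0) = n0 := Nat.card_eq_of_bijective e e.bijective ▸ hn0 ▸ rfl
  refine ⟨p, hp, FinCarrier n0, grpH, hfinH, ?_, ⟨?_⟩⟩
  · intro hpdvd
    rw [Nat.card_eq_of_bijective e e.bijective] at hpdvd
    letI : Fintype K := Fintype.ofFinite K
    haveI : Fact p.Prime := ⟨hp⟩
    rw [Nat.card_eq_fintype_card] at hpdvd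
    obtain ⟨y, hy⟩ := exists_prime_orderOf_dvd_card p hpdvd
    have hyord : orderOf ((y : K) : G) = p := by rw [Subgroup.orderOf_coe, hy]
    have hymem : ¬ p ∣ orderOf ((y : K) : G) := y.2
    exact hymem (by rw [hyord])
  · exact e3.symm.trans (MulEquiv.prodCongr ePr.symm eK.symm)
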